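/- Let φ ∈ [0,1) and let f : ℕ → ℝ be such that Δf(n) → ψ ∈ ℝ as n → ∞. If ψ + φ ∈ ℤ and yₙ = e(f(n)) for n ≥ 1, then every solution of the difference equation x_{n+1} = e(−φ)·xₙ + yₙ (n ≥ 1) is unbounded, i.e. {e(f(n))}_{n≥1} ∉ 𝕎_φ. -/

import Mathlib

open Filter

/-- `e(x) = e^{2πix}`. -/
noncomputable def e (x : ℝ) : ℂ := Complex.exp (2 * Real.pi * Complex.I * x)

/-- `𝕎_φ`: the set of sequences `{yₙ}` such that every solution of
`x_{n+1} = e(−φ)xₙ + yₙ` (n ≥ 1) is bounded. -/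
def memW (φ : ℝ) (y : ℕ → ℂ) : Prop :=
  ∀ x : ℕ → ℂ, (∀ n, 1 ≤ n → x (n + 1) = e (-φ) * x n + y n) →
    ∃ C : ℝ, ∀ n, 1 ≤ n → ‖x n‖ ≤ C

lemma e_mul_e (a b : ℝ) : e a * e b = e (a + b) := by
  unfold e
  rw [← Complex.exp_add]
  ring_nf
  push_cast
  ring_nf

lemma abs_e (x : ℝ) : ‖e x‖ = 1 := by
  unfold e
  rw [show (2 * Real.pi * Complex.I * x : ℂ) = ((2 * Real.pi * x : ℝ) : ℂ) * Complex.I by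
    push_cast; ring]
  exact Complex.norm_exp_ofReal_mul_I _

lemma e_int (m : ℤ) : e m = 1 := by
  unfold e
  rw [show (2 * Real.pi * Complex.I * (m : ℝ) : ℂ) = (m : ℤ) * (2 * Real.pi * Complex.I) by
    push_cast; ring]
  exact Complex.exp_int_mul_two_pi_mul_I m

lemma continuous_e : Continuous e := by
  unfold e
  exact Complex.continuous_exp.comp (by continuity)

/-- Key: unit vectors with consecutive differences tending to zero have unbounded
partial sums. -/
lemma key (z : ℕ → ℂ) (hz : ∀ k, ‖z k‖ = 1)
    (hd : Tendsto (fun k => z (k + 1) - z k) atTop (nhds 0)) (C : ℝ)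
    (hC : ∀ n, 1 ≤ n → ‖∑ k ∈ Finset.Ico 1 n, z k‖ ≤ C) : False := by
  have hC0 : 0 ≤ C := le_trans (by simp) (hC 1 le_rfl)
  obtain ⟨L, hL⟩ := exists_nat_gt (4 * C + 1)
  have hL1 : 1 ≤ L := by
    by_contra h
    push_neg at h
    interval_cases L
    simp at hL
    linarith
  have hLpos : (0 : ℝ) < L := by positivity
  have hε : (0 : ℝ) < 1 / (2 * L) := by positivity
  obtain ⟨N0, hN0⟩ := (Metric.tendsto_atTop.mp hd) (1 / (2 * L)) hε
  set M := max N0 1 with hM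
  have hM1 : 1 ≤ M := le_max_right _ _
  have hMN0 : N0 ≤ M := le_max_left _ _
  -- consecutive differences small beyond M
  have hsmall : ∀ k, M ≤ k → ‖z (k + 1) - z k‖ ≤ 1 / (2 * L) := by
    intro k hk
    have := hN0 k (le_trans hMN0 hk)
    rw [dist_eq_norm, sub_zero] at this
    exact le_of_lt this
  -- telescoping bound
  have htel : ∀ j, j ≤ L → ‖z (M + j) - z M‖ ≤ j / (2 * L) := by
    intro j
    induction j with
    | zero => intro _; simp
    | succ j ih =>
      intro hj
      have hj' : j ≤ L := Nat.le_of_succ_le hj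
      have h1 := ih hj'
      have h2 := hsmall (M + j) (Nat.le_add_right _ _)
      calc ‖z (M + (j + 1)) - z M‖
          = ‖(z (M + j + 1) - z (M + j)) + (z (M + j) - z M)‖ := by
            ring_nf
        _ ≤ ‖z (M + j + 1) - z (M + j)‖ + ‖z (M + j) - z M‖ :=
            norm_add_le _ _
        _ ≤ 1 / (2 * L) + j / (2 * L) := add_le_add h2 h1
        _ = ((j : ℕ) + 1 : ℝ) / (2 * L) := by ring
        _ = ((j + 1 : ℕ) : ℝ) / (2 * L) := by push_cast; ring
  -- each term in the window has real part ≥ 1/2 after rotating by conj (z M)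
  have hre : ∀ k ∈ Finset.Ico M (M + L), (1 : ℝ) / 2 ≤ (z k * (starRingEnd ℂ) (z M)).re := by
    intro k hk
    rw [Finset.mem_Ico] at hk
    obtain ⟨hk1, hk2⟩ := hk
    obtain ⟨j, rfl⟩ := Nat.exists_eq_add_of_le hk1
    have hjL : j ≤ L := by omega
    have hdist : ‖z (M + j) - z M‖ ≤ 1 / 2 := by
      calc ‖z (M + j) - z M‖ ≤ j / (2 * L) := htel j hjL
        _ ≤ L / (2 * L) := by
            apply div_le_div_of_nonneg_right _ (by positivity)
            exact_mod_cast hjL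
        _ = 1 / 2 := by field_simp
    have hsplit : z (M + j) * (starRingEnd ℂ) (z M)
        = (z (M + j) - z M) * (starRingEnd ℂ) (z M) + z M * (starRingEnd ℂ) (z M) := by
      ring
    rw [hsplit, Complex.add_re]
    have h3 : (z M * (starRingEnd ℂ) (z M)).re = 1 := by
      rw [Complex.mul_conj]
      simp [Complex.normSq_eq_norm_sq, hz M]
    have h4 : -(1/2 : ℝ) ≤ ((z (M + j) - z M) * (starRingEnd ℂ) (z M)).re := by
      have habs : ‖(z (M + j) - z M) * (starRingEnd ℂ) (z M)‖ ≤ 1 / 2 := by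
        rw [norm_mul, Complex.norm_conj, hz M, mul_one]
        exact hdist
      linarith [abs_le.mp (le_trans (Complex.abs_re_le_norm _) habs : |((z (M + j) - z M) * (starRingEnd ℂ) (z M)).re| ≤ 1/2)]
    linarith
  -- sum over the window
  have hwin : (L : ℝ) / 2 ≤ ((∑ k ∈ Finset.Ico M (M + L), z k) * (starRingEnd ℂ) (z M)).re := by
    rw [Finset.sum_mul, Complex.re_sum]
    calc (L : ℝ) / 2 = ∑ _k ∈ Finset.Ico M (M + L), (1 : ℝ) / 2 := by
          rw [Finset.sum_const, Nat.card_Ico]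
          simp
          ring
      _ ≤ ∑ k ∈ Finset.Ico M (M + L), (z k * (starRingEnd ℂ) (z M)).re :=
          Finset.sum_le_sum hre
  -- but the window sum is a difference of partial sums, bounded by 2C
  have hsplit : ∑ k ∈ Finset.Ico M (M + L), z k
      = (∑ k ∈ Finset.Ico 1 (M + L), z k) - ∑ k ∈ Finset.Ico 1 M, z k := by
    rw [eq_sub_iff_add_eq]
    rw [add_comm]
    exact Finset.sum_Ico_consecutive _ hM1 (Nat.le_add_right _ _)
  have habs2 : ‖∑ k ∈ Finset.Ico M (M + L), z k‖ ≤ 2 * C := by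
    rw [hsplit]
    calc ‖_‖ ≤ ‖∑ k ∈ Finset.Ico 1 (M + L), z k‖
          + ‖∑ k ∈ Finset.Ico 1 M, z k‖ := by
            simpa using
              norm_sub_le (∑ k ∈ Finset.Ico 1 (M + L), z k) (∑ k ∈ Finset.Ico 1 M, z k)
      _ ≤ C + C := add_le_add (hC _ (by omega)) (hC _ hM1)
      _ = 2 * C := by ring
  have hfin : ((∑ k ∈ Finset.Ico M (M + L), z k) * (starRingEnd ℂ) (z M)).re ≤ 2 * C := by
    calc ((∑ k ∈ Finset.Ico M (M + L), z k) * (starRingEnd ℂ) (z M)).re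
        ≤ ‖(∑ k ∈ Finset.Ico M (M + L), z k) * (starRingEnd ℂ) (z M)‖ :=
          Complex.re_le_norm _
      _ = ‖∑ k ∈ Finset.Ico M (M + L), z k‖ := by
          rw [norm_mul, Complex.norm_conj, hz M, mul_one]
      _ ≤ 2 * C := habs2
  -- contradiction
  have : (L : ℝ) / 2 ≤ 2 * C := le_trans hwin hfin
  linarith

/-- if `Δf(n) → ψ` and `ψ + φ ∈ ℤ`, then `{e(f(n))}_{n≥1} ∉ 𝕎_φ`. -/
theorem stmt_13 (φ : ℝ) (hφ0 : 0 ≤ φ) (hφ1 : φ < 1) (f : ℕ → ℝ)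
    (ψ : ℝ) (hψ : Tendsto (fun n : ℕ => f (n + 1) - f n) atTop (nhds ψ))
    (hint : ∃ m : ℤ, ψ + φ = (m : ℝ)) :
    ¬ memW φ (fun n => e (f n)) := by
  obtain ⟨m, hm⟩ := hint
  intro hmem
  set z : ℕ → ℂ := fun k => (e φ) ^ (k + 1) * e (f k) with hzdef
  set x : ℕ → ℂ := fun n => (e (-φ)) ^ n * ∑ k ∈ Finset.Ico 1 n, z k with hxdef
  have hinv : e (-φ) * e φ = 1 := by
    rw [e_mul_e]
    rw [show -φ + φ = 0 by ring]
    simp [e]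
  have hzabs : ∀ k, ‖z k‖ = 1 := by
    intro k
    simp only [hzdef]
    rw [norm_mul, norm_pow, abs_e, abs_e, one_pow, one_mul]
  have hrec : ∀ n, 1 ≤ n → x (n + 1) = e (-φ) * x n + e (f n) := by
    intro n hn
    simp only [hxdef]
    rw [Finset.sum_Ico_succ_top hn]
    have key2 : e (-φ) ^ (n + 1) * z n = e (f n) := by
      simp only [hzdef]
      calc e (-φ) ^ (n + 1) * (e φ ^ (n + 1) * e (f n))
          = (e (-φ) * e φ) ^ (n + 1) * e (f n) := by rw [mul_pow]; ring
        _ = e (f n) := by rw [hinv, one_pow, one_mul]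
    rw [mul_add, key2, pow_succ]
    ring
  obtain ⟨C, hCb⟩ := hmem x hrec
  have hCz : ∀ n, 1 ≤ n → ‖∑ k ∈ Finset.Ico 1 n, z k‖ ≤ C := by
    intro n hn
    have h := hCb n hn
    calc ‖∑ k ∈ Finset.Ico 1 n, z k‖
        = ‖x n‖ := by
          simp only [hxdef]
          rw [norm_mul, norm_pow, abs_e, one_pow, one_mul]
      _ ≤ C := h
  apply key z hzabs _ C hCz
  -- differences tend to zero
  have hdiff : ∀ k, z (k + 1) - z k = z k * (e (φ + (f (k + 1) - f k)) - 1) := by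
    intro k
    have h1 : e (φ + (f (k + 1) - f k)) = e φ * e (f (k + 1) - f k) := (e_mul_e _ _).symm
    have h2 : e (f k) * e (f (k + 1) - f k) = e (f (k + 1)) := by
      rw [e_mul_e]
      congr 1
      ring
    simp only [hzdef]
    rw [h1, ← h2, pow_succ]
    ring
  have h1 : Tendsto (fun k : ℕ => φ + (f (k + 1) - f k)) atTop (nhds (φ + ψ)) :=
    tendsto_const_nhds.add hψ
  have h2 : Tendsto (fun k : ℕ => e (φ + (f (k + 1) - f k))) atTop (nhds (e (φ + ψ))) :=
    (continuous_e.tendsto _).comp h1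
  have h3 : e (φ + ψ) = 1 := by
    rw [show φ + ψ = (m : ℝ) by linarith]
    exact e_int m
  have h4 : Tendsto (fun k : ℕ => e (φ + (f (k + 1) - f k)) - 1) atTop (nhds 0) := by
    simpa [h3] using h2.sub_const 1
  have heq : (fun k : ℕ => z (k + 1) - z k)
      = fun k : ℕ => z k * (e (φ + (f (k + 1) - f k)) - 1) := funext hdiff
  rw [heq, tendsto_zero_iff_norm_tendsto_zero]
  have heq2 : (fun k : ℕ => ‖z k * (e (φ + (f (k + 1) - f k)) - 1)‖)
      = fun k : ℕ => ‖e (φ + (f (k + 1) - f k)) - 1‖ := by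
    funext k
    rw [norm_mul, hzabs k, one_mul]
  rw [heq2]
  simpa using h4.norm
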